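/- (Asymptotic leakage of randomized Rabin string OT.) For every r ≥ 1 and every phase function θ, the leakage of the regular embedding ψ_θ of the primitive P^{ROT_r} satisfies Δ(ψ_θ) ≥ 1 − (r+3)/2^r (an explicit form of the paper's bound Δ ≥ 1 − O(r·2^{−r})). -/

import Mathlib

open scoped BigOperators
open Matrix

noncomputable section

open scoped Classical in
/-- Base-2 von Neumann entropy of a matrix: minus the sum of `λ·log₂ λ` over the real
eigenvalues (with multiplicity) if the matrix is Hermitian, and `0` otherwise. -/
def vNE {n : Type*} [Fintype n] (ρ : Matrix n n ℂ) : ℝ :=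
  if h : ρ.IsHermitian then -∑ i, h.eigenvalues i * Real.logb 2 (h.eigenvalues i) else 0

/-- Shannon entropy (base 2), with the convention `0·log₂ 0 = 0`. -/
def shannon {α : Type*} [Fintype α] (p : α → ℝ) : ℝ :=
  -∑ a, p a * Real.logb 2 (p a)

/-- Marginal on the first component: `P_X`. -/
def margX {X Y : Type*} [Fintype Y] (P : X × Y → ℝ) (x : X) : ℝ := ∑ y, P (x, y)

/-- Marginal on the second component: `P_Y`. -/
def margY {X Y : Type*} [Fintype X] (P : X × Y → ℝ) (y : Y) : ℝ := ∑ x, P (x, y)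

/-- Mutual information `I(X;Y)` of a joint distribution `P` (base 2). -/
def mutualInfo {X Y : Type*} [Fintype X] [Fintype Y] (P : X × Y → ℝ) : ℝ :=
  ∑ x, ∑ y, P (x, y) * Real.logb 2 (P (x, y) / (margX P x * margY P y))

/-- The regular embedding `ψ_θ(x,y) = e^{iθ(x,y)}·√(P(x,y))`. -/
def regEmb {X Y : Type*} (P θ : X × Y → ℝ) (xy : X × Y) : ℂ :=
  Complex.exp (Complex.I * θ xy) * (Real.sqrt (P xy) : ℂ)

/-- Reduced density matrix `ρ_A(θ)` of the regular embedding `ψ_θ`. -/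
def rhoA {X Y : Type*} [Fintype Y] (P θ : X × Y → ℝ) : Matrix X X ℂ :=
  Matrix.of fun x x' => ∑ y, regEmb P θ (x, y) * star (regEmb P θ (x', y))

/-- Reduced density matrix `ρ_B(θ)` of the regular embedding `ψ_θ`. -/
def rhoB {X Y : Type*} [Fintype X] (P θ : X × Y → ℝ) : Matrix Y Y ℂ :=
  Matrix.of fun y y' => ∑ x, regEmb P θ (x, y) * star (regEmb P θ (x, y'))

/-- Leakage `Δ(ψ_θ) = S(ρ_B(θ)) − I(X;Y)` of a regular embedding. -/
def leakReg {X Y : Type*} [Fintype X] [Fintype Y] (P θ : X × Y → ℝ) : ℝ :=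
  vNE (rhoB P θ) - mutualInfo P

/-- Leakage `Δ_P` of a primitive: the infimum of the leakage over all phase functions. -/
def leakPrim {X Y : Type*} [Fintype X] [Fintype Y] (P : X × Y → ℝ) : ℝ :=
  ⨅ θ : X × Y → ℝ, leakReg P θ

/-- The randomized Rabin string OT primitive `P^{ROT_r}` on `𝒳 = {0,1}^r` and
`𝒴 = {0,1}^r ⊕ {⊥}`: `P(x,y) = 2^{-r-1}` if `y = x` or `y = ⊥`, and `0` otherwise. -/
def PROT (r : ℕ) : (Fin r → Bool) × ((Fin r → Bool) ⊕ Unit) → ℝ := fun p =>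
  match p.2 with
  | Sum.inl y => if y = p.1 then 1 / 2 ^ (r + 1) else 0
  | Sum.inr _ => 1 / 2 ^ (r + 1)

section spectral
variable {n : Type*} [Fintype n] [DecidableEq n]

lemma trace_eq_sum_eig (A : Matrix n n ℂ) (hA : A.IsHermitian) :
    A.trace = ∑ i, (hA.eigenvalues i : ℂ) := by
  conv_lhs => rw [hA.spectral_theorem]
  rw [Unitary.conjStarAlgAut_apply, Matrix.trace_mul_cycle, Unitary.coe_star_mul_self, Matrix.one_mul,
    Matrix.trace_diagonal]
  rfl

lemma conj_sq (A : Matrix n n ℂ) (hA : A.IsHermitian) :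
    star (hA.eigenvectorUnitary : Matrix n n ℂ) * (A * A) * (hA.eigenvectorUnitary : Matrix n n ℂ)
      = Matrix.diagonal (RCLike.ofReal ∘ hA.eigenvalues) * Matrix.diagonal (RCLike.ofReal ∘ hA.eigenvalues) := by
  have h : star (hA.eigenvectorUnitary : Matrix n n ℂ) * A * (hA.eigenvectorUnitary : Matrix n n ℂ)
      = Matrix.diagonal (RCLike.ofReal ∘ hA.eigenvalues) := by
    have := hA.conjStarAlgAut_star_eigenvectorUnitary
    simpa using this
  have hU : (hA.eigenvectorUnitary : Matrix n n ℂ) * star (hA.eigenvectorUnitary : Matrix n n ℂ) = 1 :=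
    Unitary.coe_mul_star_self _
  rw [← h]
  simp only [Matrix.mul_assoc]
  rw [← Matrix.mul_assoc (hA.eigenvectorUnitary : Matrix n n ℂ)
    (star (hA.eigenvectorUnitary : Matrix n n ℂ)), hU, Matrix.one_mul]

lemma trace_sq_eq_sum_eig (A : Matrix n n ℂ) (hA : A.IsHermitian) :
    (A * A).trace = ∑ i, (hA.eigenvalues i : ℂ)^2 := by
  have h := conj_sq A hA
  have hU : (hA.eigenvectorUnitary : Matrix n n ℂ) * star (hA.eigenvectorUnitary : Matrix n n ℂ) = 1 :=
    Unitary.coe_mul_star_self _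
  have h2 : (A*A).trace = (star (hA.eigenvectorUnitary : Matrix n n ℂ) * (A * A) * (hA.eigenvectorUnitary : Matrix n n ℂ)).trace := by
    rw [Matrix.trace_mul_cycle, hU, Matrix.one_mul]
  rw [h2, h, Matrix.diagonal_mul_diagonal, Matrix.trace_diagonal]
  simp [sq]

lemma eig_cubic (A : Matrix n n ℂ) (hA : A.IsHermitian) (c₂ c₁ : ℂ)
    (hcube : A * A * A = c₂ • (A * A) + c₁ • A) (i : n) :
    (hA.eigenvalues i : ℂ)^3 = c₂ * (hA.eigenvalues i : ℂ)^2 + c₁ * (hA.eigenvalues i : ℂ) := by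
  set μ : ℂ := (hA.eigenvalues i : ℂ) with hμ
  set v : n → ℂ := ⇑(hA.eigenvectorBasis i) with hv0
  have hv : A *ᵥ v = μ • v := by
    have h := hA.mulVec_eigenvectorBasis i
    rw [show (hA.eigenvalues i • ⇑(hA.eigenvectorBasis i) : n → ℂ) = μ • v by
      ext j; simp [hμ, hv0, Complex.real_smul]] at h
    exact h
  have hv2 : (A * A) *ᵥ v = (μ^2) • v := by
    rw [← Matrix.mulVec_mulVec, hv, Matrix.mulVec_smul, hv, smul_smul, ← sq]
  have hv3 : (A * A * A) *ᵥ v = (μ^3) • v := by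
    rw [← Matrix.mulVec_mulVec, hv, Matrix.mulVec_smul, hv2, smul_smul,
      show μ * μ^2 = μ^3 by ring]
  have hne : v ≠ 0 := by
    have h1 := hA.eigenvectorBasis.orthonormal.ne_zero i
    intro hc
    exact h1 (by ext j; exact congrFun hc j)
  rw [hcube, Matrix.add_mulVec, Matrix.smul_mulVec, Matrix.smul_mulVec, hv2, hv,
    smul_smul, smul_smul, ← add_smul] at hv3
  obtain ⟨j, hj⟩ := Function.ne_iff.mp hne
  have hj2 := congrFun hv3 j
  simp only [Pi.smul_apply, smul_eq_mul] at hj2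
  exact (mul_right_cancel₀ hj hj2).symm



end spectral

section conc
variable (r : ℕ) (θ : (Fin r → Bool) × ((Fin r → Bool) ⊕ Unit) → ℝ)

def aR (r : ℕ) : ℝ := 1 / 2 ^ (r + 1)

lemma aR_pos : 0 < aR r := by unfold aR; positivity

lemma exp_unit (t : ℝ) : Complex.exp (Complex.I * t) * star (Complex.exp (Complex.I * t)) = 1 := by
  have h : star (Complex.exp (Complex.I * t)) = Complex.exp (-(Complex.I * t)) := by
    rw [Complex.star_def, ← Complex.exp_conj]
    congr 1
    simp [Complex.conj_ofReal]
  rw [h, ← Complex.exp_add, add_neg_cancel, Complex.exp_zero]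

def uph (x : Fin r → Bool) : ℂ :=
  Complex.exp (Complex.I * θ (x, Sum.inl x)) * star (Complex.exp (Complex.I * θ (x, Sum.inr ())))

lemma uph_mul_star (x : Fin r → Bool) : uph r θ x * star (uph r θ x) = 1 := by
  unfold uph
  have h1 := exp_unit (θ (x, Sum.inl x))
  have h2 := exp_unit (θ (x, Sum.inr ()))
  calc Complex.exp (Complex.I * θ (x, Sum.inl x)) * star (Complex.exp (Complex.I * θ (x, Sum.inr ()))) *
        star (Complex.exp (Complex.I * θ (x, Sum.inl x)) * star (Complex.exp (Complex.I * θ (x, Sum.inr ()))))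
      = (Complex.exp (Complex.I * θ (x, Sum.inl x)) * star (Complex.exp (Complex.I * θ (x, Sum.inl x)))) *
        (Complex.exp (Complex.I * θ (x, Sum.inr ())) * star (Complex.exp (Complex.I * θ (x, Sum.inr ())))) := by
        simp only [star_mul', star_star]; ring
    _ = 1 := by rw [h1, h2, mul_one]

lemma regEmb_inl (x y : Fin r → Bool) :
    regEmb (PROT r) θ (x, Sum.inl y)
      = if y = x then Complex.exp (Complex.I * θ (x, Sum.inl y)) * (Real.sqrt (aR r) : ℂ) else 0 := by
  unfold regEmb PROT aR
  by_cases h : y = x <;> simp [h]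

lemma regEmb_inr (x : Fin r → Bool) (u : Unit) :
    regEmb (PROT r) θ (x, Sum.inr u)
      = Complex.exp (Complex.I * θ (x, Sum.inr u)) * (Real.sqrt (aR r) : ℂ) := by
  unfold regEmb PROT aR
  rfl

lemma sqrt_sq : (Real.sqrt (aR r) : ℂ) * (Real.sqrt (aR r) : ℂ) = (aR r : ℂ) := by
  rw [← Complex.ofReal_mul, Real.mul_self_sqrt (aR_pos r).le]

lemma M_ll (y y' : Fin r → Bool) :
    rhoB (PROT r) θ (Sum.inl y) (Sum.inl y') = if y = y' then (aR r : ℂ) else 0 := by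
  show (∑ x, regEmb (PROT r) θ (x, Sum.inl y) * star (regEmb (PROT r) θ (x, Sum.inl y'))) = _
  by_cases h : y = y'
  · subst h
    simp only [if_true]
    rw [Finset.sum_eq_single_of_mem y (Finset.mem_univ y)]
    · rw [regEmb_inl, if_pos rfl, star_mul']
      rw [show Complex.exp (Complex.I * θ (y, Sum.inl y)) * (Real.sqrt (aR r) : ℂ) *
          (star (Complex.exp (Complex.I * θ (y, Sum.inl y))) * star ((Real.sqrt (aR r) : ℂ)))
        = (Complex.exp (Complex.I * θ (y, Sum.inl y)) * star (Complex.exp (Complex.I * θ (y, Sum.inl y)))) *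
          ((Real.sqrt (aR r) : ℂ) * star ((Real.sqrt (aR r) : ℂ))) by ring]
      rw [exp_unit, one_mul, Complex.star_def, Complex.conj_ofReal, sqrt_sq]
    · intro x _ hx
      rw [regEmb_inl, if_neg (fun hc => hx (hc.symm)), zero_mul]
  · rw [if_neg h]
    apply Finset.sum_eq_zero
    intro x _
    by_cases hx : y = x
    · rw [regEmb_inl r θ x y', if_neg (fun hc => h (hx.trans hc.symm)), star_zero, mul_zero]
    · rw [regEmb_inl r θ x y, if_neg hx, zero_mul]

lemma M_lr (y : Fin r → Bool) :
    rhoB (PROT r) θ (Sum.inl y) (Sum.inr ()) = (aR r : ℂ) * uph r θ y := by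
  show (∑ x, regEmb (PROT r) θ (x, Sum.inl y) * star (regEmb (PROT r) θ (x, Sum.inr ()))) = _
  rw [Finset.sum_eq_single_of_mem y (Finset.mem_univ y)]
  · rw [regEmb_inl, if_pos rfl, regEmb_inr, star_mul']
    unfold uph
    rw [show star ((Real.sqrt (aR r) : ℂ)) = ((Real.sqrt (aR r) : ℂ)) by
      rw [Complex.star_def, Complex.conj_ofReal]]
    rw [show Complex.exp (Complex.I * θ (y, Sum.inl y)) * (Real.sqrt (aR r) : ℂ) *
        (star (Complex.exp (Complex.I * θ (y, Sum.inr ()))) * (Real.sqrt (aR r) : ℂ))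
      = ((Real.sqrt (aR r) : ℂ) * (Real.sqrt (aR r) : ℂ)) *
        (Complex.exp (Complex.I * θ (y, Sum.inl y)) * star (Complex.exp (Complex.I * θ (y, Sum.inr ())))) by
        ring]
    rw [sqrt_sq]
  · intro x _ hx
    rw [regEmb_inl, if_neg (fun hc => hx hc.symm), zero_mul]

lemma M_rl (y : Fin r → Bool) :
    rhoB (PROT r) θ (Sum.inr ()) (Sum.inl y) = (aR r : ℂ) * star (uph r θ y) := by
  show (∑ x, regEmb (PROT r) θ (x, Sum.inr ()) * star (regEmb (PROT r) θ (x, Sum.inl y))) = _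
  rw [Finset.sum_eq_single_of_mem y (Finset.mem_univ y)]
  · rw [regEmb_inl, if_pos rfl, regEmb_inr, star_mul']
    unfold uph
    rw [show star ((Real.sqrt (aR r) : ℂ)) = ((Real.sqrt (aR r) : ℂ)) by
      rw [Complex.star_def, Complex.conj_ofReal]]
    rw [← sqrt_sq r]
    simp only [star_mul', star_star]
    ring
  · intro x _ hx
    rw [regEmb_inl, if_neg (fun hc => hx hc.symm), star_zero, mul_zero]

lemma card_X : (Fintype.card (Fin r → Bool) : ℂ) = 2 ^ r := by
  simp [Fintype.card_fun]

lemma two_pow_aR : (2 : ℂ) ^ r * (aR r : ℂ) = 1 / 2 := by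
  unfold aR
  push_cast
  rw [pow_succ]
  field_simp

lemma M_rr (u u' : Unit) :
    rhoB (PROT r) θ (Sum.inr u) (Sum.inr u') = (1 / 2 : ℂ) := by
  show (∑ x, regEmb (PROT r) θ (x, Sum.inr u) * star (regEmb (PROT r) θ (x, Sum.inr u'))) = _
  have hu : u = () := rfl
  have hu' : u' = () := rfl
  subst hu hu'
  have hterm : ∀ x : Fin r → Bool,
      regEmb (PROT r) θ (x, Sum.inr ()) * star (regEmb (PROT r) θ (x, Sum.inr ())) = (aR r : ℂ) := by
    intro x
    rw [regEmb_inr, star_mul']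
    rw [show star ((Real.sqrt (aR r) : ℂ)) = ((Real.sqrt (aR r) : ℂ)) by
      rw [Complex.star_def, Complex.conj_ofReal]]
    rw [show Complex.exp (Complex.I * θ (x, Sum.inr ())) * (Real.sqrt (aR r) : ℂ) *
        (star (Complex.exp (Complex.I * θ (x, Sum.inr ()))) * (Real.sqrt (aR r) : ℂ))
      = (Complex.exp (Complex.I * θ (x, Sum.inr ())) * star (Complex.exp (Complex.I * θ (x, Sum.inr ())))) *
        ((Real.sqrt (aR r) : ℂ) * (Real.sqrt (aR r) : ℂ)) by ring]
    rw [exp_unit, one_mul, sqrt_sq]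
  rw [Finset.sum_congr rfl (fun x _ => hterm x), Finset.sum_const, nsmul_eq_mul,
    Finset.card_univ, card_X, two_pow_aR]

end conc
lemma rhoB_isHermitian {X Y : Type*} [Fintype X] (P θ : X × Y → ℝ) : (rhoB P θ).IsHermitian := by
  unfold Matrix.IsHermitian
  ext i j
  rw [Matrix.conjTranspose_apply]
  show star (∑ x, regEmb P θ (x, j) * star (regEmb P θ (x, i)))
    = ∑ x, regEmb P θ (x, i) * star (regEmb P θ (x, j))
  rw [star_sum]
  exact Finset.sum_congr rfl fun x _ => by rw [star_mul', star_star, mul_comm]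

section conc2
variable (r : ℕ) (θ : (Fin r → Bool) × ((Fin r → Bool) ⊕ Unit) → ℝ)

local notation "M" => rhoB (PROT r) θ
local notation "aC" => ((aR r : ℝ) : ℂ)
local notation "u" => uph r θ

lemma star_uph_mul (x : Fin r → Bool) : star (u x) * u x = 1 := by
  rw [mul_comm]; exact uph_mul_star r θ x

lemma M_lr' (y : Fin r → Bool) (v : Unit) :
    M (Sum.inl y) (Sum.inr v) = aC * u y := by
  obtain rfl : v = () := rfl; exact M_lr r θ y

lemma M_rl' (y : Fin r → Bool) (v : Unit) :
    M (Sum.inr v) (Sum.inl y) = aC * star (u y) := by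
  obtain rfl : v = () := rfl; exact M_rl r θ y

lemma M2_ll (y y' : Fin r → Bool) :
    (M * M) (Sum.inl y) (Sum.inl y')
      = (if y = y' then aC * aC else 0) + aC * aC * (u y * star (u y')) := by
  rw [Matrix.mul_apply, Fintype.sum_sum_type]
  simp only [Finset.univ_unique, Finset.sum_singleton]
  simp only [M_ll, M_lr', M_rl']
  rw [Finset.sum_congr rfl (fun z _ => by
    rw [ite_mul, zero_mul, mul_ite, mul_zero] :
    ∀ z ∈ Finset.univ, (if y = z then aC else 0) * (if z = y' then aC else 0)
      = if y = z then (if z = y' then aC * aC else 0) else 0)]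
  rw [Finset.sum_ite_eq, if_pos (Finset.mem_univ y)]
  rw [show aC * u y * (aC * star (u y')) = aC * aC * (u y * star (u y')) by ring]

lemma M2_lr (y : Fin r → Bool) (v : Unit) :
    (M * M) (Sum.inl y) (Sum.inr v) = aC * (aC + 1/2) * u y := by
  rw [Matrix.mul_apply, Fintype.sum_sum_type]
  simp only [Finset.univ_unique, Finset.sum_singleton]
  simp only [M_ll, M_lr', M_rr]
  rw [Finset.sum_congr rfl (fun z _ => by rw [ite_mul, zero_mul] :
    ∀ z ∈ Finset.univ, (if y = z then aC else 0) * (aC * u z)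
      = if y = z then aC * (aC * u z) else 0)]
  rw [Finset.sum_ite_eq, if_pos (Finset.mem_univ y)]
  ring

lemma M2_rl (y : Fin r → Bool) (v : Unit) :
    (M * M) (Sum.inr v) (Sum.inl y) = aC * (aC + 1/2) * star (u y) := by
  rw [Matrix.mul_apply, Fintype.sum_sum_type]
  simp only [Finset.univ_unique, Finset.sum_singleton]
  simp only [M_ll, M_rl', M_rr]
  rw [Finset.sum_congr rfl (fun z _ => by rw [mul_ite, mul_zero] :
    ∀ z ∈ Finset.univ, (aC * star (u z)) * (if z = y then aC else 0)
      = if z = y then (aC * star (u z)) * aC else 0)]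
  rw [Finset.sum_ite_eq', if_pos (Finset.mem_univ y)]
  ring

lemma M2_rr (v w : Unit) : (M * M) (Sum.inr v) (Sum.inr w) = aC/2 + 1/4 := by
  rw [Matrix.mul_apply, Fintype.sum_sum_type]
  simp only [Finset.univ_unique, Finset.sum_singleton]
  simp only [M_lr', M_rl', M_rr]
  rw [Finset.sum_congr rfl (fun z _ => by
    rw [show aC * star (u z) * (aC * u z) = aC * aC * (star (u z) * u z) by ring,
      star_uph_mul, mul_one] :
    ∀ z ∈ Finset.univ, (aC * star (u z)) * (aC * u z) = aC * aC)]
  rw [Finset.sum_const, nsmul_eq_mul, Finset.card_univ, card_X]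
  rw [show (2:ℂ)^r * (aC * aC) = ((2:ℂ)^r * aC) * aC by ring, two_pow_aR]
  ring

lemma M_cubic :
    M * M * M = (2*aC + 1/2) • (M * M) + (-(aC * (aC + 1/2))) • M := by
  have h2r := two_pow_aR r
  ext i j
  simp only [Matrix.add_apply, Matrix.smul_apply, smul_eq_mul]
  cases i with
  | inl y =>
    cases j with
    | inl y' =>
      rw [Matrix.mul_apply, Fintype.sum_sum_type]
      simp only [Finset.univ_unique, Finset.sum_singleton]
      simp only [M2_ll, M2_lr, M_ll, M_lr', M_rl']
      rw [Finset.sum_congr rfl (fun z _ => by rw [mul_ite, mul_zero] :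
        ∀ z ∈ Finset.univ,
          ((if y = z then aC * aC else 0) + aC * aC * (u y * star (u z))) * (if z = y' then aC else 0)
          = if z = y' then ((if y = z then aC * aC else 0) + aC * aC * (u y * star (u z))) * aC else 0)]
      rw [Finset.sum_ite_eq', if_pos (Finset.mem_univ y')]
      rw [show aC * (aC + 1/2) * u y * (aC * star (u y'))
        = aC * aC * (aC + 1/2) * (u y * star (u y')) by ring]
      by_cases h : y = y' <;> simp only [h, if_true, if_false] <;> ring
    | inr v =>
      rw [Matrix.mul_apply, Fintype.sum_sum_type]
      simp only [Finset.univ_unique, Finset.sum_singleton]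
      simp only [M2_ll, M2_lr, M_lr', M_rr]
      have key : ∀ z : Fin r → Bool,
          ((if y = z then aC * aC else 0) + aC * aC * (u y * star (u z))) * (aC * u z)
            = (if y = z then aC * aC * (aC * u z) else 0) + (aC * aC * aC) * u y := by
        intro z
        rw [add_mul, ite_mul, zero_mul]
        congr 1
        rw [show aC * aC * (u y * star (u z)) * (aC * u z)
            = (aC * aC * aC) * u y * (star (u z) * u z) by ring, star_uph_mul, mul_one]
      rw [Finset.sum_congr rfl (fun z _ => key z), Finset.sum_add_distrib,
        Finset.sum_ite_eq, if_pos (Finset.mem_univ y),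
        Finset.sum_const, nsmul_eq_mul, Finset.card_univ, card_X]
      rw [show (2:ℂ)^r * (aC * aC * aC * u y) = ((2:ℂ)^r * aC) * (aC * aC * u y) by ring, h2r]
      ring
  | inr v =>
    cases j with
    | inl y' =>
      rw [Matrix.mul_apply, Fintype.sum_sum_type]
      simp only [Finset.univ_unique, Finset.sum_singleton]
      simp only [M2_rl, M2_rr, M_ll, M_rl']
      rw [Finset.sum_congr rfl (fun z _ => by rw [mul_ite, mul_zero] :
        ∀ z ∈ Finset.univ, (aC * (aC + 1/2) * star (u z)) * (if z = y' then aC else 0)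
          = if z = y' then (aC * (aC + 1/2) * star (u z)) * aC else 0)]
      rw [Finset.sum_ite_eq', if_pos (Finset.mem_univ y')]
      ring
    | inr w =>
      rw [Matrix.mul_apply, Fintype.sum_sum_type]
      simp only [Finset.univ_unique, Finset.sum_singleton]
      simp only [M2_rl, M2_rr, M_lr', M_rr]
      have key : ∀ z : Fin r → Bool,
          (aC * (aC + 1/2) * star (u z)) * (aC * u z) = aC * aC * (aC + 1/2) := by
        intro z
        rw [show (aC * (aC + 1/2) * star (u z)) * (aC * u z)
          = aC * aC * (aC + 1/2) * (star (u z) * u z) by ring, star_uph_mul, mul_one]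
      rw [Finset.sum_congr rfl (fun z _ => key z),
        Finset.sum_const, nsmul_eq_mul, Finset.card_univ, card_X]
      rw [show (2:ℂ)^r * (aC * aC * (aC + 1/2)) = ((2:ℂ)^r * aC) * (aC * (aC + 1/2)) by ring, h2r]
      ring

lemma M_trace : (M : Matrix _ _ ℂ).trace = 1 := by
  rw [Matrix.trace, Fintype.sum_sum_type]
  simp only [Finset.univ_unique, Finset.sum_singleton]
  simp only [Matrix.diag_apply, M_ll, M_rr, eq_self_iff_true, if_true]
  rw [Finset.sum_const, nsmul_eq_mul, Finset.card_univ, card_X, two_pow_aR]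
  norm_num

lemma M2_trace : ((M * M) : Matrix _ _ ℂ).trace = 3/2 * aC + 1/4 := by
  rw [Matrix.trace, Fintype.sum_sum_type]
  simp only [Finset.univ_unique, Finset.sum_singleton]
  simp only [Matrix.diag_apply, M2_ll, M2_rr, eq_self_iff_true, if_true]
  rw [Finset.sum_congr rfl (fun z _ => by rw [uph_mul_star, mul_one] :
    ∀ z ∈ Finset.univ, aC * aC + aC * aC * (u z * star (u z)) = aC * aC + aC * aC)]
  rw [Finset.sum_const, nsmul_eq_mul, Finset.card_univ, card_X]
  rw [show (2:ℂ)^r * (aC * aC + aC * aC) = ((2:ℂ)^r * aC) * (2 * aC) by ring, two_pow_aR]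
  ring

end conc2
section final
variable (r : ℕ) (θ : (Fin r → Bool) × ((Fin r → Bool) ⊕ Unit) → ℝ)

lemma two_pow_aR_real : (2:ℝ)^r * aR r = 1/2 := by
  unfold aR
  rw [pow_succ]
  field_simp

lemma logb_aR : Real.logb 2 (aR r) = -(r+1 : ℝ) := by
  unfold aR
  rw [one_div, Real.logb_inv, Real.logb_pow, Real.logb_self_eq_one one_lt_two]
  push_cast
  ring

lemma margX_PROT (x : Fin r → Bool) : margX (PROT r) x = 2 * aR r := by
  unfold margX
  rw [Fintype.sum_sum_type]
  simp only [Finset.univ_unique, Finset.sum_singleton]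
  have h1 : ∀ y : Fin r → Bool, PROT r (x, Sum.inl y) = if y = x then aR r else 0 := fun y => rfl
  have h2 : PROT r (x, Sum.inr default) = aR r := rfl
  rw [Finset.sum_congr rfl (fun y _ => h1 y), h2, Finset.sum_ite_eq', if_pos (Finset.mem_univ x)]
  ring

lemma margY_PROT_inl (y : Fin r → Bool) : margY (PROT r) (Sum.inl y) = aR r := by
  unfold margY
  have h1 : ∀ x : Fin r → Bool, PROT r (x, Sum.inl y) = if y = x then aR r else 0 := fun x => rfl
  rw [Finset.sum_congr rfl (fun x _ => h1 x), Finset.sum_ite_eq, if_pos (Finset.mem_univ y)]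

lemma margY_PROT_inr (v : Unit) : margY (PROT r) (Sum.inr v) = 1/2 := by
  unfold margY
  have h1 : ∀ x : Fin r → Bool, PROT r (x, Sum.inr v) = aR r := fun x => rfl
  rw [Finset.sum_congr rfl (fun x _ => h1 x), Finset.sum_const, nsmul_eq_mul, Finset.card_univ]
  rw [show ((Fintype.card (Fin r → Bool) : ℝ)) = (2:ℝ)^r by simp [Fintype.card_fun],
    two_pow_aR_real]

lemma mutualInfo_PROT : mutualInfo (PROT r) = r / 2 := by
  unfold mutualInfo
  have hinner : ∀ x : Fin r → Bool,
      (∑ y, PROT r (x, y) * Real.logb 2 (PROT r (x, y) / (margX (PROT r) x * margY (PROT r) y)))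
        = aR r * r := by
    intro x
    rw [Fintype.sum_sum_type]
    simp only [Finset.univ_unique, Finset.sum_singleton]
    have h1 : ∀ y : Fin r → Bool, PROT r (x, Sum.inl y) = if y = x then aR r else 0 := fun y => rfl
    have h2 : PROT r (x, Sum.inr default) = aR r := rfl
    have ha := aR_pos r
    have hinr : PROT r (x, Sum.inr default) *
        Real.logb 2 (PROT r (x, Sum.inr default) /
          (margX (PROT r) x * margY (PROT r) (Sum.inr default))) = 0 := by
      rw [h2, margX_PROT, margY_PROT_inr]
      rw [show aR r / (2 * aR r * (1/2)) = 1 by field_simp]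
      rw [Real.logb_one, mul_zero]
    rw [hinr, add_zero]
    rw [Finset.sum_eq_single_of_mem x (Finset.mem_univ x)]
    · rw [h1, if_pos rfl, margX_PROT, margY_PROT_inl]
      rw [show aR r / (2 * aR r * aR r) = (2:ℝ)^r by
        rw [show (2:ℝ)^r = ((2:ℝ)^r * aR r) / aR r by field_simp]
        rw [two_pow_aR_real]; field_simp]
      rw [show ((2:ℝ)^r : ℝ) = (2:ℝ)^(r:ℕ) from rfl, Real.logb_pow,
        Real.logb_self_eq_one one_lt_two, mul_one]
    · intro y _ hy
      rw [h1, if_neg (fun hc => hy hc), zero_mul]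
  rw [Finset.sum_congr rfl (fun x _ => hinner x), Finset.sum_const, nsmul_eq_mul,
    Finset.card_univ]
  rw [show ((Fintype.card (Fin r → Bool) : ℝ)) = (2:ℝ)^r by simp [Fintype.card_fun]]
  rw [show (2:ℝ)^r * (aR r * r) = ((2:ℝ)^r * aR r) * r by ring, two_pow_aR_real]
  ring

end final

section final2
variable (r : ℕ) (θ : (Fin r → Bool) × ((Fin r → Bool) ⊕ Unit) → ℝ)

theorem leakage_PROT_asymptotic' (hr : 1 ≤ r) :
    1 - ((r : ℝ) + 3) / 2 ^ r ≤ vNE (rhoB (PROT r) θ) - mutualInfo (PROT r) := by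
  have ha := aR_pos r
  have h2r := two_pow_aR_real r
  set a := aR r with haa
  have ha14 : a ≤ 1/4 := by
    have h2 : (2:ℝ) ≤ 2^r := by
      calc (2:ℝ) = 2^1 := (pow_one 2).symm
      _ ≤ 2^r := pow_le_pow_right₀ one_le_two hr
    nlinarith [mul_le_mul_of_nonneg_right h2 ha.le]
  have hM := rhoB_isHermitian (PROT r) θ
  have heig : ∀ i, hM.eigenvalues i = 0 ∨ hM.eigenvalues i = a ∨ hM.eigenvalues i = a + 1/2 := by
    intro i
    have h := eig_cubic _ hM _ _ (M_cubic r θ) i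
    set lam := hM.eigenvalues i with hlam
    have hreal : lam^3 = (2*a + 1/2)*lam^2 - (a*(a+1/2))*lam := by
      have h2 : ((lam^3 : ℝ) : ℂ) = (((2*a + 1/2)*lam^2 - (a*(a+1/2))*lam : ℝ) : ℂ) := by
        push_cast
        rw [h]
        push_cast
        ring
      exact_mod_cast h2
    have hfac : lam * (lam - a) * (lam - (a+1/2)) = 0 := by linear_combination hreal
    rcases mul_eq_zero.mp hfac with h1 | h3
    · rcases mul_eq_zero.mp h1 with h0 | h2
      · exact Or.inl h0
      · exact Or.inr (Or.inl (by linarith))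
    · exact Or.inr (Or.inr (by linarith))
  have hsum : ∑ i, hM.eigenvalues i = 1 := by
    have h1 := trace_eq_sum_eig _ hM
    rw [M_trace] at h1
    have h2 : (((∑ i, hM.eigenvalues i : ℝ)) : ℂ) = ((1:ℝ) : ℂ) := by
      push_cast
      rw [← h1]
    exact_mod_cast h2
  have hsum2 : ∑ i, (hM.eigenvalues i)^2 = 3/2 * a + 1/4 := by
    have h1 := trace_sq_eq_sum_eig _ hM
    rw [M2_trace] at h1
    have h2 : (((∑ i, (hM.eigenvalues i)^2 : ℝ)) : ℂ) = ((3/2 * a + 1/4 : ℝ) : ℂ) := by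
      push_cast
      rw [← h1]
    exact_mod_cast h2
  set L := Real.logb 2 (a + 1/2) with hLdef
  set β := -2*(L + ((r:ℝ)+1)) with hβ
  set α := ((r:ℝ)+1) - β*a with hα
  have hlogba : Real.logb 2 a = -((r:ℝ)+1) := logb_aR r
  have hpt : ∀ i, hM.eigenvalues i * Real.logb 2 (hM.eigenvalues i)
      = -(α * hM.eigenvalues i + β * (hM.eigenvalues i)^2) := by
    intro i
    rcases heig i with h | h | h <;> rw [h]
    · simp
    · rw [hlogba, hα]; ring
    · rw [← hLdef, hα, hβ]; ring
  have hvne : vNE (rhoB (PROT r) θ) = α + β*(3/2*a + 1/4) := by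
    unfold vNE
    rw [dif_pos hM]
    refine Eq.trans (congrArg Neg.neg (Finset.sum_congr rfl fun i _ => hpt i)) ?_
    rw [Finset.sum_neg_distrib, neg_neg, Finset.sum_add_distrib, ← Finset.mul_sum,
      ← Finset.mul_sum, hsum, hsum2, mul_one]
  rw [hvne, mutualInfo_PROT]
  set g := Real.logb 2 (1 + 2*a) with hg
  have hLg : L = g - 1 := by
    rw [hLdef, hg, show a + 1/2 = (1+2*a)/2 by ring,
      Real.logb_div (by linarith) (by norm_num), Real.logb_self_eq_one one_lt_two]
  have hg0 : 0 ≤ g := Real.logb_nonneg one_lt_two (by linarith)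
  have hg4 : g ≤ 4*a := by
    have h1 : Real.log (1+2*a) ≤ 2*a := by
      have := Real.log_le_sub_one_of_pos (x := 1+2*a) (by linarith)
      linarith
    have h2 : (1/2:ℝ) < Real.log 2 := by
      have := Real.log_two_gt_d9
      linarith
    have h3 : g * Real.log 2 = Real.log (1+2*a) := by
      rw [hg, Real.logb]
      field_simp
    nlinarith [Real.log_nonneg (show (1:ℝ) ≤ 1+2*a by linarith)]
  have hrw : ((r:ℝ)+3)/2^r = ((r:ℝ)+3)*(2*a) := by
    have hpow : (0:ℝ) < 2^r := by positivity
    rw [div_eq_iff (ne_of_gt hpow),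
      show ((r:ℝ)+3)*(2*a)*2^r = ((r:ℝ)+3)*2*(2^r*a) by ring, h2r]
    ring
  rw [hrw, hα, hβ, hLg]
  nlinarith [mul_nonneg (sub_nonneg.mpr hg4) ha.le,
    mul_nonneg (Nat.cast_nonneg r : (0:ℝ) ≤ (r:ℝ)) ha.le, ha14, ha.le, hg0, hg4,
    mul_nonneg ha.le ha.le]
end final2


/-- **Asymptotic leakage of randomized Rabin string OT.** For every `r ≥ 1`
and every phase function `θ`, the leakage of the regular embedding `ψ_θ` of `P^{ROT_r}`
satisfies `Δ(ψ_θ) ≥ 1 − (r+3)/2^r`. -/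
theorem leakage_PROT_asymptotic (r : ℕ) (hr : 1 ≤ r)
    (θ : (Fin r → Bool) × ((Fin r → Bool) ⊕ Unit) → ℝ) :
    1 - ((r : ℝ) + 3) / 2 ^ r ≤ leakReg (PROT r) θ := by
  unfold leakReg
  exact leakage_PROT_asymptotic' r θ hr
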